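/- arXiv:2112.04183 — 3 statements merged into one kernel-verified Lean document; each statement's English description precedes it below -/
import Mathlib

section
/- In any directed co-graph with at least two vertices, there exist two distinct vertices x and y that are directed twins, i.e., N⁻(x)\{y} = N⁻(y)\{x} and N⁺(x)\{y} = N⁺(y)\{x}. -/
/-- Arc relation of the induced subdigraph on a vertex set `S`. -/
def restrict (A : ℕ → ℕ → Prop) (S : Finset ℕ) : ℕ → ℕ → Prop :=
  fun x y => A x y ∧ x ∈ S ∧ y ∈ S

/-- `walkLen A n u v`: there is a directed walk of length `n` from `u` to `v`. -/
def walkLen (A : ℕ → ℕ → Prop) : ℕ → ℕ → ℕ → Prop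
  | 0, u, v => u = v
  | n + 1, u, v => ∃ w, A u w ∧ walkLen A n w v

/-- `v` is reachable from `u` by a directed walk. -/
def Reach (A : ℕ → ℕ → Prop) (u v : ℕ) : Prop :=
  ∃ n, walkLen A n u v

/-- Directed distance: length of a shortest directed walk (= shortest directed path). -/
noncomputable def ddist (A : ℕ → ℕ → Prop) (u v : ℕ) : ℕ :=
  sInf {n | walkLen A n u v}

/-- `x` and `y` are directed twins: `N⁻(x)\{y} = N⁻(y)\{x}` and `N⁺(x)\{y} = N⁺(y)\{x}`. -/
def DTwins (A : ℕ → ℕ → Prop) (x y : ℕ) : Prop :=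
  x ≠ y ∧
    {w | A w x} \ {y} = {w | A w y} \ {x} ∧
    {w | A x w} \ {y} = {w | A y w} \ {x}

/-- The arc relation obtained by adding a new vertex `u` as a directed twin of `v`;
`auv`, `avu` determine which of the arcs `(u,v)`, `(v,u)` are present (any of the
four adjacency patterns between the twins). -/
def twinArc (A : ℕ → ℕ → Prop) (v u : ℕ) (auv avu : Prop) : ℕ → ℕ → Prop :=
  fun x y => A x y ∨ (x = u ∧ y = v ∧ auv) ∨ (x = v ∧ y = u ∧ avu) ∨
    (x = u ∧ A v y) ∨ (y = u ∧ A x v)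

/-- Directed co-graphs: single vertices, disjoint union, series and order composition. -/
inductive DCo : Finset ℕ → (ℕ → ℕ → Prop) → Prop
  | single (v : ℕ) : DCo {v} (fun _ _ => False)
  | union {V₁ V₂ : Finset ℕ} {A₁ A₂ : ℕ → ℕ → Prop} :
      Disjoint V₁ V₂ → DCo V₁ A₁ → DCo V₂ A₂ →
      DCo (V₁ ∪ V₂) (fun x y => A₁ x y ∨ A₂ x y)
  | series {V₁ V₂ : Finset ℕ} {A₁ A₂ : ℕ → ℕ → Prop} :
      Disjoint V₁ V₂ → DCo V₁ A₁ → DCo V₂ A₂ →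
      DCo (V₁ ∪ V₂)
        (fun x y => A₁ x y ∨ A₂ x y ∨ (x ∈ V₁ ∧ y ∈ V₂) ∨ (x ∈ V₂ ∧ y ∈ V₁))
  | order {V₁ V₂ : Finset ℕ} {A₁ A₂ : ℕ → ℕ → Prop} :
      Disjoint V₁ V₂ → DCo V₁ A₁ → DCo V₂ A₂ →
      DCo (V₁ ∪ V₂) (fun x y => A₁ x y ∨ A₂ x y ∨ (x ∈ V₁ ∧ y ∈ V₂))

/-- Extended directed co-graphs: additionally closed under directed union. -/
inductive ExtDCo : Finset ℕ → (ℕ → ℕ → Prop) → Prop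
  | single (v : ℕ) : ExtDCo {v} (fun _ _ => False)
  | union {V₁ V₂ : Finset ℕ} {A₁ A₂ : ℕ → ℕ → Prop} :
      Disjoint V₁ V₂ → ExtDCo V₁ A₁ → ExtDCo V₂ A₂ →
      ExtDCo (V₁ ∪ V₂) (fun x y => A₁ x y ∨ A₂ x y)
  | series {V₁ V₂ : Finset ℕ} {A₁ A₂ : ℕ → ℕ → Prop} :
      Disjoint V₁ V₂ → ExtDCo V₁ A₁ → ExtDCo V₂ A₂ →
      ExtDCo (V₁ ∪ V₂)
        (fun x y => A₁ x y ∨ A₂ x y ∨ (x ∈ V₁ ∧ y ∈ V₂) ∨ (x ∈ V₂ ∧ y ∈ V₁))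
  | order {V₁ V₂ : Finset ℕ} {A₁ A₂ : ℕ → ℕ → Prop} :
      Disjoint V₁ V₂ → ExtDCo V₁ A₁ → ExtDCo V₂ A₂ →
      ExtDCo (V₁ ∪ V₂) (fun x y => A₁ x y ∨ A₂ x y ∨ (x ∈ V₁ ∧ y ∈ V₂))
  | dUnion {V₁ V₂ : Finset ℕ} {A₁ A₂ : ℕ → ℕ → Prop} (R : ℕ → ℕ → Prop) :
      Disjoint V₁ V₂ → ExtDCo V₁ A₁ → ExtDCo V₂ A₂ →
      ExtDCo (V₁ ∪ V₂) (fun x y => A₁ x y ∨ A₂ x y ∨ (x ∈ V₁ ∧ y ∈ V₂ ∧ R x y))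

/-- Digraphs constructible from single vertices by disjoint union and adding directed twins. -/
inductive TwinBuilt : Finset ℕ → (ℕ → ℕ → Prop) → Prop
  | single (v : ℕ) : TwinBuilt {v} (fun _ _ => False)
  | union {V₁ V₂ : Finset ℕ} {A₁ A₂ : ℕ → ℕ → Prop} :
      Disjoint V₁ V₂ → TwinBuilt V₁ A₁ → TwinBuilt V₂ A₂ →
      TwinBuilt (V₁ ∪ V₂) (fun x y => A₁ x y ∨ A₂ x y)
  | twin {V : Finset ℕ} {A : ℕ → ℕ → Prop} (v u : ℕ) (auv avu : Prop) :
      v ∈ V → u ∉ V → TwinBuilt V A →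
      TwinBuilt (insert u V) (twinArc A v u auv avu)

/-- Twin-distance-hereditary digraphs: built from a single vertex by disjoint union,
adding directed twins, and adding pendant plus / pendant minus vertices. -/
inductive TwinDH : Finset ℕ → (ℕ → ℕ → Prop) → Prop
  | single (v : ℕ) : TwinDH {v} (fun _ _ => False)
  | union {V₁ V₂ : Finset ℕ} {A₁ A₂ : ℕ → ℕ → Prop} :
      Disjoint V₁ V₂ → TwinDH V₁ A₁ → TwinDH V₂ A₂ →
      TwinDH (V₁ ∪ V₂) (fun x y => A₁ x y ∨ A₂ x y)
  | twin {V : Finset ℕ} {A : ℕ → ℕ → Prop} (v u : ℕ) (auv avu : Prop) :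
      v ∈ V → u ∉ V → TwinDH V A →
      TwinDH (insert u V) (twinArc A v u auv avu)
  | pendPlus {V : Finset ℕ} {A : ℕ → ℕ → Prop} (a u : ℕ) :
      a ∈ V → u ∉ V → TwinDH V A →
      TwinDH (insert u V) (fun x y => A x y ∨ (x = u ∧ y = a))
  | pendMinus {V : Finset ℕ} {A : ℕ → ℕ → Prop} (a u : ℕ) :
      a ∈ V → u ∉ V → TwinDH V A →
      TwinDH (insert u V) (fun x y => A x y ∨ (x = a ∧ y = u))

/-- Undirected distance-hereditary graphs, via the recursive characterization:
built from a single vertex by pendant vertices, false twins and true twins. -/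
inductive UDH : Finset ℕ → (ℕ → ℕ → Prop) → Prop
  | single (v : ℕ) : UDH {v} (fun _ _ => False)
  | pendant {V : Finset ℕ} {E : ℕ → ℕ → Prop} (a u : ℕ) :
      a ∈ V → u ∉ V → UDH V E →
      UDH (insert u V) (fun x y => E x y ∨ (x = u ∧ y = a) ∨ (x = a ∧ y = u))
  | falseTwin {V : Finset ℕ} {E : ℕ → ℕ → Prop} (v u : ℕ) :
      v ∈ V → u ∉ V → UDH V E →
      UDH (insert u V) (fun x y => E x y ∨ (x = u ∧ E v y) ∨ (y = u ∧ E x v))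
  | trueTwin {V : Finset ℕ} {E : ℕ → ℕ → Prop} (v u : ℕ) :
      v ∈ V → u ∉ V → UDH V E →
      UDH (insert u V)
        (fun x y => E x y ∨ (x = u ∧ E v y) ∨ (y = u ∧ E x v) ∨
          (x = u ∧ y = v) ∨ (x = v ∧ y = u))

/-- The induced subdigraph on `C` is strongly connected. -/
def StronglyConn (A : ℕ → ℕ → Prop) (C : Finset ℕ) : Prop :=
  ∀ u ∈ C, ∀ v ∈ C, Reach (restrict A C) u v

/-- `C` is a strong component of the digraph with vertex set `V` and arcs `A`. -/
def IsStrongComponent (A : ℕ → ℕ → Prop) (V C : Finset ℕ) : Prop :=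
  C.Nonempty ∧ C ⊆ V ∧ StronglyConn A C ∧
    ∀ D, C ⊆ D → D ⊆ V → StronglyConn A D → D = C

/-- The induced subdigraph on `S` is weakly connected. -/
def WeaklyConn (A : ℕ → ℕ → Prop) (S : Finset ℕ) : Prop :=
  S.Nonempty ∧ ∀ u ∈ S, ∀ v ∈ S,
    Relation.ReflTransGen (fun x y => restrict A S x y ∨ restrict A S y x) u v

/-- The induced subdigraph on `V` is acyclic. -/
def AcyclicOn (A : ℕ → ℕ → Prop) (V : Finset ℕ) : Prop :=
  ∀ v ∈ V, ∀ n, 0 < n → ¬ walkLen (restrict A V) n v v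

/-- `CRle A V r`: the cycle rank of the digraph `(V, A)` is at most `r`.
This is the standard recursive definition: acyclic digraphs have rank 0, digraphs
decompose into their strong components, and deleting a vertex decreases rank by
at most one. -/
inductive CRle (A : ℕ → ℕ → Prop) : Finset ℕ → ℕ → Prop
  | base {V : Finset ℕ} {r : ℕ} : AcyclicOn A V → CRle A V r
  | scc {V : Finset ℕ} {r : ℕ} :
      (∀ C, IsStrongComponent A V C → CRle A C r) → CRle A V r
  | step {V : Finset ℕ} {r : ℕ} (v : ℕ) :
      v ∈ V → CRle A (V.erase v) r → CRle A V (r + 1)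

/-- The cycle rank of the digraph `(V, A)`. -/
noncomputable def cycleRank (A : ℕ → ℕ → Prop) (V : Finset ℕ) : ℕ :=
  sInf {r | CRle A V r}

/-- `CW k V A f`: the `k`-labeled digraph with vertices `V`, arcs `A` and labeling `f`
is constructible by a directed clique-width `k`-expression. -/
inductive CW (k : ℕ) : Finset ℕ → (ℕ → ℕ → Prop) → (ℕ → Fin k) → Prop
  | vertex (v : ℕ) (a : Fin k) : CW k {v} (fun _ _ => False) (fun _ => a)
  | union {V₁ V₂ : Finset ℕ} {A₁ A₂ : ℕ → ℕ → Prop} {f₁ f₂ : ℕ → Fin k} :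
      Disjoint V₁ V₂ → CW k V₁ A₁ f₁ → CW k V₂ A₂ f₂ →
      CW k (V₁ ∪ V₂) (fun x y => A₁ x y ∨ A₂ x y)
        (fun x => if x ∈ V₁ then f₁ x else f₂ x)
  | addArcs {V : Finset ℕ} {A : ℕ → ℕ → Prop} {f : ℕ → Fin k} (a b : Fin k) :
      a ≠ b → CW k V A f →
      CW k V (fun x y => A x y ∨ (x ∈ V ∧ y ∈ V ∧ f x = a ∧ f y = b)) f
  | relabel {V : Finset ℕ} {A : ℕ → ℕ → Prop} {f : ℕ → Fin k} (a b : Fin k) :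
      CW k V A f →
      CW k V A (fun x => if f x = a then b else f x)


lemma DCo.supp {V : Finset ℕ} {A : ℕ → ℕ → Prop} (h : DCo V A) :
    ∀ x y, A x y → x ∈ V ∧ y ∈ V := by
  induction h with
  | single v => intro x y hxy; exact hxy.elim
  | union hd h1 h2 ih1 ih2 =>
      intro x y hxy
      simp only [Finset.mem_union]
      rcases hxy with h | h
      · exact ⟨Or.inl (ih1 _ _ h).1, Or.inl (ih1 _ _ h).2⟩
      · exact ⟨Or.inr (ih2 _ _ h).1, Or.inr (ih2 _ _ h).2⟩
  | series hd h1 h2 ih1 ih2 =>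
      intro x y hxy
      simp only [Finset.mem_union]
      rcases hxy with h | h | ⟨hx, hy⟩ | ⟨hx, hy⟩
      · exact ⟨Or.inl (ih1 _ _ h).1, Or.inl (ih1 _ _ h).2⟩
      · exact ⟨Or.inr (ih2 _ _ h).1, Or.inr (ih2 _ _ h).2⟩
      · exact ⟨Or.inl hx, Or.inr hy⟩
      · exact ⟨Or.inr hx, Or.inl hy⟩
  | order hd h1 h2 ih1 ih2 =>
      intro x y hxy
      simp only [Finset.mem_union]
      rcases hxy with h | h | ⟨hx, hy⟩
      · exact ⟨Or.inl (ih1 _ _ h).1, Or.inl (ih1 _ _ h).2⟩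
      · exact ⟨Or.inr (ih2 _ _ h).1, Or.inr (ih2 _ _ h).2⟩
      · exact ⟨Or.inl hx, Or.inr hy⟩

lemma DCo.irrefl' {V : Finset ℕ} {A : ℕ → ℕ → Prop} (h : DCo V A) :
    ∀ x, ¬ A x x := by
  induction h with
  | single v => intro x hx; exact hx
  | union hd h1 h2 ih1 ih2 =>
      intro x hx; rcases hx with h | h
      · exact ih1 x h
      · exact ih2 x h
  | series hd h1 h2 ih1 ih2 =>
      intro x hx
      rcases hx with h | h | ⟨hx1, hx2⟩ | ⟨hx2, hx1⟩
      · exact ih1 x h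
      · exact ih2 x h
      · exact Finset.disjoint_left.mp hd hx1 hx2
      · exact Finset.disjoint_left.mp hd hx1 hx2
  | order hd h1 h2 ih1 ih2 =>
      intro x hx
      rcases hx with h | h | ⟨hx1, hx2⟩
      · exact ih1 x h
      · exact ih2 x h
      · exact Finset.disjoint_left.mp hd hx1 hx2

lemma DCo.nonempty' {V : Finset ℕ} {A : ℕ → ℕ → Prop} (h : DCo V A) :
    V.Nonempty := by
  induction h with
  | single v => exact ⟨v, Finset.mem_singleton_self v⟩
  | union hd h1 h2 ih1 ih2 => exact ih1.mono Finset.subset_union_left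
  | series hd h1 h2 ih1 ih2 => exact ih1.mono Finset.subset_union_left
  | order hd h1 h2 ih1 ih2 => exact ih1.mono Finset.subset_union_left

lemma dtwins_congr {A B : ℕ → ℕ → Prop} {x y : ℕ}
    (hab : ∀ u w, A u w ↔ B u w) (h : DTwins A x y) : DTwins B x y := by
  obtain ⟨hxy, hin, hout⟩ := h
  have e1 : ∀ z : ℕ, {w | B w z} = {w | A w z} := by
    intro z; ext w; simp [hab]
  have e2 : ∀ z : ℕ, {w | B z w} = {w | A z w} := by
    intro z; ext w; simp [hab]
  exact ⟨hxy, by rw [e1, e1]; exact hin, by rw [e2, e2]; exact hout⟩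

lemma nbhd_lift {x y : ℕ} (hxy : x ≠ y) {P Q C D : ℕ → Prop}
    (h : ∀ w, (P w ∧ w ≠ y) ↔ (Q w ∧ w ≠ x))
    (hCD : ∀ w, C w ↔ D w)
    (hC : ∀ w, C w → w ≠ x ∧ w ≠ y) :
    ∀ w, ((P w ∨ C w) ∧ w ≠ y ↔ (Q w ∨ D w) ∧ w ≠ x) := by
  intro w
  constructor
  · rintro ⟨hp | hc, hwy⟩
    · exact ⟨Or.inl ((h w).mp ⟨hp, hwy⟩).1, ((h w).mp ⟨hp, hwy⟩).2⟩
    · exact ⟨Or.inr ((hCD w).mp hc), (hC w hc).1⟩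
  · rintro ⟨hq | hd, hwx⟩
    · exact ⟨Or.inl ((h w).mpr ⟨hq, hwx⟩).1, ((h w).mpr ⟨hq, hwx⟩).2⟩
    · have hc := (hCD w).mpr hd
      exact ⟨Or.inr hc, (hC w hc).2⟩

set_option maxHeartbeats 1000000 in
lemma dco_key {V₁ V₂ : Finset ℕ} {A₁ A₂ : ℕ → ℕ → Prop} (c1 c2 : Prop)
    (hd : Disjoint V₁ V₂) (h1 : DCo V₁ A₁) (h2 : DCo V₂ A₂)
    (IH1 : 2 ≤ V₁.card → ∃ x ∈ V₁, ∃ y ∈ V₁, DTwins A₁ x y)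
    (IH2 : 2 ≤ V₂.card → ∃ x ∈ V₂, ∃ y ∈ V₂, DTwins A₂ x y) :
    ∃ x ∈ V₁ ∪ V₂, ∃ y ∈ V₁ ∪ V₂,
      DTwins (fun x y => A₁ x y ∨ A₂ x y ∨ (x ∈ V₁ ∧ y ∈ V₂ ∧ c1) ∨
        (x ∈ V₂ ∧ y ∈ V₁ ∧ c2)) x y := by
  have s1 := h1.supp
  have s2 := h2.supp
  by_cases hc1 : 2 ≤ V₁.card
  · obtain ⟨x, hx, y, hy, hxy, hin, hout⟩ := IH1 hc1
    refine ⟨x, Finset.mem_union_left _ hx, y, Finset.mem_union_left _ hy, hxy, ?_, ?_⟩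
    · ext w
      have hx2 : x ∉ V₂ := Finset.disjoint_left.mp hd hx
      have hy2 : y ∉ V₂ := Finset.disjoint_left.mp hd hy
      have hw : ∀ w, (A₁ w x ∧ w ≠ y) ↔ (A₁ w y ∧ w ≠ x) := by
        intro w
        have := Set.ext_iff.mp hin w
        simpa only [Set.mem_diff, Set.mem_setOf_eq, Set.mem_singleton_iff] using this
      simp only [Set.mem_diff, Set.mem_setOf_eq, Set.mem_singleton_iff]
      refine nbhd_lift hxy hw
        (C := fun w => A₂ w x ∨ (w ∈ V₁ ∧ x ∈ V₂ ∧ c1) ∨ (w ∈ V₂ ∧ x ∈ V₁ ∧ c2))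
        (D := fun w => A₂ w y ∨ (w ∈ V₁ ∧ y ∈ V₂ ∧ c1) ∨ (w ∈ V₂ ∧ y ∈ V₁ ∧ c2)) ?_ ?_ w
      · intro w
        constructor
        · rintro (h | ⟨_, hx2', _⟩ | ⟨hw2, _, hc⟩)
          · exact absurd (s2 _ _ h).2 hx2
          · exact absurd hx2' hx2
          · exact Or.inr (Or.inr ⟨hw2, hy, hc⟩)
        · rintro (h | ⟨_, hy2', _⟩ | ⟨hw2, _, hc⟩)
          · exact absurd (s2 _ _ h).2 hy2
          · exact absurd hy2' hy2
          · exact Or.inr (Or.inr ⟨hw2, hx, hc⟩)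
      · rintro w (h | ⟨_, hx2', _⟩ | ⟨hw2, _, _⟩)
        · exact absurd (s2 _ _ h).2 hx2
        · exact absurd hx2' hx2
        · exact ⟨fun he => hx2 (he ▸ hw2), fun he => hy2 (he ▸ hw2)⟩
    · ext w
      have hx2 : x ∉ V₂ := Finset.disjoint_left.mp hd hx
      have hy2 : y ∉ V₂ := Finset.disjoint_left.mp hd hy
      have hw : ∀ w, (A₁ x w ∧ w ≠ y) ↔ (A₁ y w ∧ w ≠ x) := by
        intro w
        have := Set.ext_iff.mp hout w
        simpa only [Set.mem_diff, Set.mem_setOf_eq, Set.mem_singleton_iff] using this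
      simp only [Set.mem_diff, Set.mem_setOf_eq, Set.mem_singleton_iff]
      refine nbhd_lift hxy hw
        (C := fun w => A₂ x w ∨ (x ∈ V₁ ∧ w ∈ V₂ ∧ c1) ∨ (x ∈ V₂ ∧ w ∈ V₁ ∧ c2))
        (D := fun w => A₂ y w ∨ (y ∈ V₁ ∧ w ∈ V₂ ∧ c1) ∨ (y ∈ V₂ ∧ w ∈ V₁ ∧ c2)) ?_ ?_ w
      · intro w
        constructor
        · rintro (h | ⟨_, hw2, hc⟩ | ⟨hx2', _, _⟩)
          · exact absurd (s2 _ _ h).1 hx2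
          · exact Or.inr (Or.inl ⟨hy, hw2, hc⟩)
          · exact absurd hx2' hx2
        · rintro (h | ⟨_, hw2, hc⟩ | ⟨hy2', _, _⟩)
          · exact absurd (s2 _ _ h).1 hy2
          · exact Or.inr (Or.inl ⟨hx, hw2, hc⟩)
          · exact absurd hy2' hy2
      · rintro w (h | ⟨_, hw2, _⟩ | ⟨hx2', _, _⟩)
        · exact absurd (s2 _ _ h).1 hx2
        · exact ⟨fun he => hx2 (he ▸ hw2), fun he => hy2 (he ▸ hw2)⟩
        · exact absurd hx2' hx2
  · by_cases hc2 : 2 ≤ V₂.card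
    · obtain ⟨x, hx, y, hy, hxy, hin, hout⟩ := IH2 hc2
      refine ⟨x, Finset.mem_union_right _ hx, y, Finset.mem_union_right _ hy, hxy, ?_, ?_⟩
      · ext w
        have hx1 : x ∉ V₁ := Finset.disjoint_right.mp hd hx
        have hy1 : y ∉ V₁ := Finset.disjoint_right.mp hd hy
        have hw : ∀ w, (A₂ w x ∧ w ≠ y) ↔ (A₂ w y ∧ w ≠ x) := by
          intro w
          have := Set.ext_iff.mp hin w
          simpa only [Set.mem_diff, Set.mem_setOf_eq, Set.mem_singleton_iff] using this
        simp only [Set.mem_diff, Set.mem_setOf_eq, Set.mem_singleton_iff]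
        have key := nbhd_lift hxy hw
          (C := fun w => A₁ w x ∨ (w ∈ V₁ ∧ x ∈ V₂ ∧ c1) ∨ (w ∈ V₂ ∧ x ∈ V₁ ∧ c2))
          (D := fun w => A₁ w y ∨ (w ∈ V₁ ∧ y ∈ V₂ ∧ c1) ∨ (w ∈ V₂ ∧ y ∈ V₁ ∧ c2))
          (by
            intro w
            constructor
            · rintro (h | ⟨hw1, _, hc⟩ | ⟨_, hx1', _⟩)
              · exact absurd (s1 _ _ h).2 hx1
              · exact Or.inr (Or.inl ⟨hw1, hy, hc⟩)
              · exact absurd hx1' hx1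
            · rintro (h | ⟨hw1, _, hc⟩ | ⟨_, hy1', _⟩)
              · exact absurd (s1 _ _ h).2 hy1
              · exact Or.inr (Or.inl ⟨hw1, hx, hc⟩)
              · exact absurd hy1' hy1)
          (by
            rintro w (h | ⟨hw1, _, _⟩ | ⟨_, hx1', _⟩)
            · exact absurd (s1 _ _ h).2 hx1
            · exact ⟨fun he => hx1 (he ▸ hw1), fun he => hy1 (he ▸ hw1)⟩
            · exact absurd hx1' hx1) w
        constructor
        · rintro ⟨h, hwy⟩
          have hre : A₂ w x ∨ A₁ w x ∨ (w ∈ V₁ ∧ x ∈ V₂ ∧ c1) ∨ (w ∈ V₂ ∧ x ∈ V₁ ∧ c2) := ?_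
          · obtain ⟨h2, hwx⟩ := key.mp ⟨hre, hwy⟩
            refine ⟨?_, hwx⟩
            rcases h2 with h | h | h | h
            exacts [Or.inr (Or.inl h), Or.inl h,
              Or.inr (Or.inr (Or.inl h)), Or.inr (Or.inr (Or.inr h))]
          · rcases h with h | h | h | h
            exacts [Or.inr (Or.inl h), Or.inl h,
              Or.inr (Or.inr (Or.inl h)), Or.inr (Or.inr (Or.inr h))]
        · rintro ⟨h, hwx⟩
          have hre : A₂ w y ∨ A₁ w y ∨ (w ∈ V₁ ∧ y ∈ V₂ ∧ c1) ∨ (w ∈ V₂ ∧ y ∈ V₁ ∧ c2) := ?_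
          · obtain ⟨h2, hwy⟩ := key.mpr ⟨hre, hwx⟩
            refine ⟨?_, hwy⟩
            rcases h2 with h | h | h | h
            exacts [Or.inr (Or.inl h), Or.inl h,
              Or.inr (Or.inr (Or.inl h)), Or.inr (Or.inr (Or.inr h))]
          · rcases h with h | h | h | h
            exacts [Or.inr (Or.inl h), Or.inl h,
              Or.inr (Or.inr (Or.inl h)), Or.inr (Or.inr (Or.inr h))]
      · ext w
        have hx1 : x ∉ V₁ := Finset.disjoint_right.mp hd hx
        have hy1 : y ∉ V₁ := Finset.disjoint_right.mp hd hy
        have hw : ∀ w, (A₂ x w ∧ w ≠ y) ↔ (A₂ y w ∧ w ≠ x) := by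
          intro w
          have := Set.ext_iff.mp hout w
          simpa only [Set.mem_diff, Set.mem_setOf_eq, Set.mem_singleton_iff] using this
        simp only [Set.mem_diff, Set.mem_setOf_eq, Set.mem_singleton_iff]
        have key := nbhd_lift hxy hw
          (C := fun w => A₁ x w ∨ (x ∈ V₁ ∧ w ∈ V₂ ∧ c1) ∨ (x ∈ V₂ ∧ w ∈ V₁ ∧ c2))
          (D := fun w => A₁ y w ∨ (y ∈ V₁ ∧ w ∈ V₂ ∧ c1) ∨ (y ∈ V₂ ∧ w ∈ V₁ ∧ c2))
          (by
            intro w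
            constructor
            · rintro (h | ⟨hx1', _, _⟩ | ⟨_, hw1, hc⟩)
              · exact absurd (s1 _ _ h).1 hx1
              · exact absurd hx1' hx1
              · exact Or.inr (Or.inr ⟨hy, hw1, hc⟩)
            · rintro (h | ⟨hy1', _, _⟩ | ⟨_, hw1, hc⟩)
              · exact absurd (s1 _ _ h).1 hy1
              · exact absurd hy1' hy1
              · exact Or.inr (Or.inr ⟨hx, hw1, hc⟩))
          (by
            rintro w (h | ⟨hx1', _, _⟩ | ⟨_, hw1, _⟩)
            · exact absurd (s1 _ _ h).1 hx1
            · exact absurd hx1' hx1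
            · exact ⟨fun he => hx1 (he ▸ hw1), fun he => hy1 (he ▸ hw1)⟩) w
        constructor
        · rintro ⟨h, hwy⟩
          have hre : A₂ x w ∨ A₁ x w ∨ (x ∈ V₁ ∧ w ∈ V₂ ∧ c1) ∨ (x ∈ V₂ ∧ w ∈ V₁ ∧ c2) := ?_
          · obtain ⟨h2, hwx⟩ := key.mp ⟨hre, hwy⟩
            refine ⟨?_, hwx⟩
            rcases h2 with h | h | h | h
            exacts [Or.inr (Or.inl h), Or.inl h,
              Or.inr (Or.inr (Or.inl h)), Or.inr (Or.inr (Or.inr h))]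
          · rcases h with h | h | h | h
            exacts [Or.inr (Or.inl h), Or.inl h,
              Or.inr (Or.inr (Or.inl h)), Or.inr (Or.inr (Or.inr h))]
        · rintro ⟨h, hwx⟩
          have hre : A₂ y w ∨ A₁ y w ∨ (y ∈ V₁ ∧ w ∈ V₂ ∧ c1) ∨ (y ∈ V₂ ∧ w ∈ V₁ ∧ c2) := ?_
          · obtain ⟨h2, hwy⟩ := key.mpr ⟨hre, hwx⟩
            refine ⟨?_, hwy⟩
            rcases h2 with h | h | h | h
            exacts [Or.inr (Or.inl h), Or.inl h,
              Or.inr (Or.inr (Or.inl h)), Or.inr (Or.inr (Or.inr h))]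
          · rcases h with h | h | h | h
            exacts [Or.inr (Or.inl h), Or.inl h,
              Or.inr (Or.inr (Or.inl h)), Or.inr (Or.inr (Or.inr h))]
    · -- both singletons
      have e1 : V₁.card = 1 := by
        have := Finset.card_pos.mpr h1.nonempty'; omega
      have e2 : V₂.card = 1 := by
        have := Finset.card_pos.mpr h2.nonempty'; omega
      obtain ⟨a, ha⟩ := Finset.card_eq_one.mp e1
      obtain ⟨b, hb⟩ := Finset.card_eq_one.mp e2
      subst ha; subst hb
      have hab : a ≠ b := by
        intro he; subst he
        exact Finset.disjoint_left.mp hd (Finset.mem_singleton_self a)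
          (Finset.mem_singleton_self a)
      have hA1 : ∀ u w, ¬ A₁ u w := by
        intro u w h
        obtain ⟨hu, hw⟩ := s1 _ _ h
        rw [Finset.mem_singleton] at hu hw
        subst hu; subst hw
        exact h1.irrefl' _ h
      have hA2 : ∀ u w, ¬ A₂ u w := by
        intro u w h
        obtain ⟨hu, hw⟩ := s2 _ _ h
        rw [Finset.mem_singleton] at hu hw
        subst hu; subst hw
        exact h2.irrefl' _ h
      refine ⟨a, Finset.mem_union_left _ (Finset.mem_singleton_self a),
        b, Finset.mem_union_right _ (Finset.mem_singleton_self b), hab, ?_, ?_⟩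
      · ext w
        simp only [Set.mem_diff, Set.mem_setOf_eq, Set.mem_singleton_iff,
          Finset.mem_singleton]
        constructor
        · rintro ⟨h, hw⟩
          rcases h with h | h | ⟨h', h'', _⟩ | ⟨h', h'', _⟩
          · exact absurd h (hA1 _ _)
          · exact absurd h (hA2 _ _)
          · exact absurd h'' hab
          · exact absurd h' hw
        · rintro ⟨h, hw⟩
          rcases h with h | h | ⟨h', h'', _⟩ | ⟨h', h'', _⟩
          · exact absurd h (hA1 _ _)
          · exact absurd h (hA2 _ _)
          · exact absurd h' hw
          · exact absurd h'' (Ne.symm hab)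
      · ext w
        simp only [Set.mem_diff, Set.mem_setOf_eq, Set.mem_singleton_iff,
          Finset.mem_singleton]
        constructor
        · rintro ⟨h, hw⟩
          rcases h with h | h | ⟨h', h'', _⟩ | ⟨h', h'', _⟩
          · exact absurd h (hA1 _ _)
          · exact absurd h (hA2 _ _)
          · exact absurd h'' hw
          · exact absurd h' hab
        · rintro ⟨h, hw⟩
          rcases h with h | h | ⟨h', h'', _⟩ | ⟨h', h'', _⟩
          · exact absurd h (hA1 _ _)
          · exact absurd h (hA2 _ _)
          · exact absurd h' (Ne.symm hab)
          · exact absurd h'' hw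

theorem stmt_0 (V : Finset ℕ) (A : ℕ → ℕ → Prop)
    (h : DCo V A) (hcard : 2 ≤ V.card) :
    ∃ x ∈ V, ∃ y ∈ V, DTwins A x y := by
  induction h with
  | single v => simp at hcard
  | union hd h1 h2 ih1 ih2 =>
      have key := dco_key False False hd h1 h2 ih1 ih2
      obtain ⟨x, hx, y, hy, htw⟩ := key
      exact ⟨x, hx, y, hy, dtwins_congr (by tauto) htw⟩
  | series hd h1 h2 ih1 ih2 =>
      have key := dco_key True True hd h1 h2 ih1 ih2
      obtain ⟨x, hx, y, hy, htw⟩ := key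
      exact ⟨x, hx, y, hy, dtwins_congr (by tauto) htw⟩
  | order hd h1 h2 ih1 ih2 =>
      have key := dco_key True False hd h1 h2 ih1 ih2
      obtain ⟨x, hx, y, hy, htw⟩ := key
      exact ⟨x, hx, y, hy, dtwins_congr (by tauto) htw⟩
end

section
/- If G is a twin-distance-hereditary digraph, then every weakly connected induced subdigraph H of G is also a twin-distance-hereditary digraph. -/
lemma twinDH_conf {V : Finset ℕ} {A : ℕ → ℕ → Prop} (h : TwinDH V A) :
    ∀ x y, A x y → x ∈ V ∧ y ∈ V := by
  induction h with
  | single v => intro x y hxy; exact hxy.elim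
  | union hd h1 h2 ih1 ih2 =>
      rintro x y (hxy | hxy)
      · exact ⟨Finset.mem_union_left _ (ih1 x y hxy).1, Finset.mem_union_left _ (ih1 x y hxy).2⟩
      · exact ⟨Finset.mem_union_right _ (ih2 x y hxy).1, Finset.mem_union_right _ (ih2 x y hxy).2⟩
  | twin v u auv avu hv hu h ih =>
      rintro x y (hxy | ⟨rfl, rfl, -⟩ | ⟨rfl, rfl, -⟩ | ⟨rfl, hxy⟩ | ⟨rfl, hxy⟩)
      · exact ⟨Finset.mem_insert_of_mem (ih x y hxy).1, Finset.mem_insert_of_mem (ih x y hxy).2⟩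
      · exact ⟨Finset.mem_insert_self _ _, Finset.mem_insert_of_mem hv⟩
      · exact ⟨Finset.mem_insert_of_mem hv, Finset.mem_insert_self _ _⟩
      · exact ⟨Finset.mem_insert_self _ _, Finset.mem_insert_of_mem (ih v y hxy).2⟩
      · exact ⟨Finset.mem_insert_of_mem (ih x v hxy).1, Finset.mem_insert_self _ _⟩
  | pendPlus a u ha hu h ih =>
      rintro x y (hxy | ⟨rfl, rfl⟩)
      · exact ⟨Finset.mem_insert_of_mem (ih x y hxy).1, Finset.mem_insert_of_mem (ih x y hxy).2⟩
      · exact ⟨Finset.mem_insert_self _ _, Finset.mem_insert_of_mem ha⟩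
  | pendMinus a u ha hu h ih =>
      rintro x y (hxy | ⟨rfl, rfl⟩)
      · exact ⟨Finset.mem_insert_of_mem (ih x y hxy).1, Finset.mem_insert_of_mem (ih x y hxy).2⟩
      · exact ⟨Finset.mem_insert_of_mem ha, Finset.mem_insert_self _ _⟩

lemma twinDH_noloop {V : Finset ℕ} {A : ℕ → ℕ → Prop} (h : TwinDH V A) :
    ∀ x, ¬ A x x := by
  induction h with
  | single v => intro x hx; exact hx
  | union hd h1 h2 ih1 ih2 => rintro x (hx | hx); exacts [ih1 x hx, ih2 x hx]
  | twin v u auv avu hv hu h ih =>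
      rintro x (hx | ⟨rfl, rfl, -⟩ | ⟨rfl, rfl, -⟩ | ⟨rfl, hx⟩ | ⟨rfl, hx⟩)
      · exact ih x hx
      · exact hu hv
      · exact hu hv
      · exact hu (twinDH_conf h v _ hx).2
      · exact hu (twinDH_conf h _ v hx).1
  | pendPlus a u ha hu h ih =>
      rintro x (hx | ⟨rfl, rfl⟩)
      · exact ih x hx
      · exact hu ha
  | pendMinus a u ha hu h ih =>
      rintro x (hx | ⟨rfl, rfl⟩)
      · exact ih x hx
      · exact hu ha

lemma rtg_map {r s : ℕ → ℕ → Prop} (φ : ℕ → ℕ)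
    (h : ∀ x y, r x y → s (φ x) (φ y) ∨ φ x = φ y) {a b : ℕ}
    (w : Relation.ReflTransGen r a b) :
    Relation.ReflTransGen s (φ a) (φ b) := by
  induction w with
  | refl => exact Relation.ReflTransGen.refl
  | tail _ hbc ih =>
      rcases h _ _ hbc with h' | h'
      · exact ih.tail h'
      · rw [← h']; exact ih

lemma rtg_inv {r : ℕ → ℕ → Prop} {P : ℕ → Prop}
    (h : ∀ x y, r x y → P x → P y) {a b : ℕ}
    (w : Relation.ReflTransGen r a b) : P a → P b := by
  induction w with
  | refl => exact id
  | tail _ hbc ih => exact fun ha => h _ _ hbc (ih ha)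

lemma twinDH_map (σ : ℕ ≃ ℕ) {V : Finset ℕ} {A : ℕ → ℕ → Prop} (h : TwinDH V A) :
    TwinDH (V.image σ) (fun x y => A (σ.symm x) (σ.symm y)) := by
  induction h with
  | single v =>
      rw [Finset.image_singleton]
      exact TwinDH.single (σ v)
  | union hd h1 h2 ih1 ih2 =>
      rw [Finset.image_union]
      exact TwinDH.union ((Finset.disjoint_image σ.injective).2 hd) ih1 ih2
  | @twin V' A' v u auv avu hv hu h ih =>
      rw [Finset.image_insert]
      have key : (fun x y => twinArc A' v u auv avu (σ.symm x) (σ.symm y)) =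
          twinArc (fun x y => A' (σ.symm x) (σ.symm y)) (σ v) (σ u) auv avu := by
        funext x y
        simp only [twinArc, Equiv.symm_apply_eq, Equiv.symm_apply_apply]
      rw [key]
      refine TwinDH.twin (σ v) (σ u) auv avu (Finset.mem_image_of_mem _ hv) ?_ ih
      intro hmem
      obtain ⟨b, hb, hσ⟩ := Finset.mem_image.1 hmem
      exact hu (σ.injective hσ ▸ hb)
  | @pendPlus V' A' a u ha hu h ih =>
      rw [Finset.image_insert]
      have key : (fun x y => (fun x y => A' x y ∨ (x = u ∧ y = a)) (σ.symm x) (σ.symm y)) =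
          (fun x y => (fun x y => A' (σ.symm x) (σ.symm y)) x y ∨ (x = σ u ∧ y = σ a)) := by
        funext x y
        simp only [Equiv.symm_apply_eq]
      rw [key]
      refine TwinDH.pendPlus (σ a) (σ u) (Finset.mem_image_of_mem _ ha) ?_ ih
      intro hmem
      obtain ⟨b, hb, hσ⟩ := Finset.mem_image.1 hmem
      exact hu (σ.injective hσ ▸ hb)
  | @pendMinus V' A' a u ha hu h ih =>
      rw [Finset.image_insert]
      have key : (fun x y => (fun x y => A' x y ∨ (x = a ∧ y = u)) (σ.symm x) (σ.symm y)) =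
          (fun x y => (fun x y => A' (σ.symm x) (σ.symm y)) x y ∨ (x = σ a ∧ y = σ u)) := by
        funext x y
        simp only [Equiv.symm_apply_eq]
      rw [key]
      refine TwinDH.pendMinus (σ a) (σ u) (Finset.mem_image_of_mem _ ha) ?_ ih
      intro hmem
      obtain ⟨b, hb, hσ⟩ := Finset.mem_image.1 hmem
      exact hu (σ.injective hσ ▸ hb)


lemma twinDH_induced {V : Finset ℕ} {A : ℕ → ℕ → Prop} (h : TwinDH V A) :
    ∀ S : Finset ℕ, S ⊆ V → WeaklyConn A S → TwinDH S (restrict A S) := by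
  induction h with
  | single v =>
      intro S hS hw
      rcases Finset.subset_singleton_iff.1 hS with rfl | rfl
      · exact absurd hw.1 (by simp)
      · have hrel : restrict (fun _ _ => False) ({v} : Finset ℕ) = (fun _ _ => False) := by
          funext x y; simp [restrict]
        rw [hrel]; exact TwinDH.single v
  | @union V₁ V₂ A₁ A₂ hd h1 h2 ih1 ih2 =>
      intro S hS hw
      obtain ⟨⟨u₀, hu₀⟩, hconn⟩ := hw
      by_cases hc : u₀ ∈ V₁
      · have hS1 : S ⊆ V₁ := by
          intro x hx
          refine rtg_inv (P := fun z => z ∈ V₁) ?_ (hconn u₀ hu₀ x hx) hc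
          rintro p q (⟨hab | hab, -, -⟩ | ⟨hab | hab, -, -⟩) hp
          · exact (twinDH_conf h1 _ _ hab).2
          · exact absurd (twinDH_conf h2 _ _ hab).1 (Finset.disjoint_left.1 hd hp)
          · exact (twinDH_conf h1 _ _ hab).1
          · exact absurd (twinDH_conf h2 _ _ hab).2 (Finset.disjoint_left.1 hd hp)
        have hrel : restrict (fun x y => A₁ x y ∨ A₂ x y) S = restrict A₁ S := by
          funext x y; apply propext
          constructor
          · rintro ⟨hab | hab, hx, hy⟩
            · exact ⟨hab, hx, hy⟩
            · exact absurd (twinDH_conf h2 _ _ hab).1 (Finset.disjoint_left.1 hd (hS1 hx))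
          · rintro ⟨hab, hx, hy⟩; exact ⟨Or.inl hab, hx, hy⟩
        rw [hrel]
        refine ih1 S hS1 ⟨⟨u₀, hu₀⟩, ?_⟩
        intro x hx y hy
        have hcxy := hconn x hx y hy
        simp only [hrel] at hcxy
        exact hcxy
      · have hc2 : u₀ ∈ V₂ := (Finset.mem_union.1 (hS hu₀)).resolve_left hc
        have hS2 : S ⊆ V₂ := by
          intro x hx
          refine rtg_inv (P := fun z => z ∈ V₂) ?_ (hconn u₀ hu₀ x hx) hc2
          rintro p q (⟨hab | hab, -, -⟩ | ⟨hab | hab, -, -⟩) hp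
          · exact absurd (twinDH_conf h1 _ _ hab).1 (Finset.disjoint_right.1 hd hp)
          · exact (twinDH_conf h2 _ _ hab).2
          · exact absurd (twinDH_conf h1 _ _ hab).2 (Finset.disjoint_right.1 hd hp)
          · exact (twinDH_conf h2 _ _ hab).1
        have hrel : restrict (fun x y => A₁ x y ∨ A₂ x y) S = restrict A₂ S := by
          funext x y; apply propext
          constructor
          · rintro ⟨hab | hab, hx, hy⟩
            · exact absurd (twinDH_conf h1 _ _ hab).1 (Finset.disjoint_right.1 hd (hS2 hx))
            · exact ⟨hab, hx, hy⟩
          · rintro ⟨hab, hx, hy⟩; exact ⟨Or.inr hab, hx, hy⟩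
        rw [hrel]
        refine ih2 S hS2 ⟨⟨u₀, hu₀⟩, ?_⟩
        intro x hx y hy
        have hcxy := hconn x hx y hy
        simp only [hrel] at hcxy
        exact hcxy
  | @twin V' A' v u auv avu hv hu h ih =>
      intro S hS hw
      obtain ⟨hne, hconn⟩ := hw
      have hvu : v ≠ u := fun e => hu (e ▸ hv)
      by_cases huS : u ∈ S
      · by_cases hvS : v ∈ S
        · -- both twins in S: erase u
          have hTV : S.erase u ⊆ V' := by
            intro x hx
            exact (Finset.mem_insert.1 (hS (Finset.mem_of_mem_erase hx))).resolve_left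
              (Finset.ne_of_mem_erase hx)
          have hvT : v ∈ S.erase u := Finset.mem_erase.2 ⟨hvu, hvS⟩
          have edge : ∀ x y, restrict (twinArc A' v u auv avu) S x y →
              restrict A' (S.erase u) ((fun z => if z = u then v else z) x)
                ((fun z => if z = u then v else z) y) ∨
              (fun z => if z = u then v else z) x = (fun z => if z = u then v else z) y := by
            rintro x y ⟨hab | ⟨e1, e2, -⟩ | ⟨e1, e2, -⟩ | ⟨e1, hab⟩ | ⟨e1, hab⟩, hx, hy⟩
            · have hxu : x ≠ u := fun e => hu (e ▸ (twinDH_conf h _ _ hab).1)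
              have hyu : y ≠ u := fun e => hu (e ▸ (twinDH_conf h _ _ hab).2)
              left
              simp only [if_neg hxu, if_neg hyu]
              exact ⟨hab, Finset.mem_erase.2 ⟨hxu, hx⟩, Finset.mem_erase.2 ⟨hyu, hy⟩⟩
            · subst x; subst y; right; simp [hvu]
            · subst x; subst y; right; simp [hvu]
            · subst x
              have hyu : y ≠ u := fun e => hu (e ▸ (twinDH_conf h _ _ hab).2)
              left
              simp only [if_pos rfl, if_neg hyu]
              exact ⟨hab, hvT, Finset.mem_erase.2 ⟨hyu, hy⟩⟩
            · subst y
              have hxu : x ≠ u := fun e => hu (e ▸ (twinDH_conf h _ _ hab).1)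
              left
              simp only [if_pos rfl, if_neg hxu]
              exact ⟨hab, Finset.mem_erase.2 ⟨hxu, hx⟩, hvT⟩
          have hwT : WeaklyConn A' (S.erase u) := by
            refine ⟨⟨v, hvT⟩, ?_⟩
            intro x hx y hy
            have hx' : x ≠ u := (Finset.mem_erase.1 hx).1
            have hy' : y ≠ u := (Finset.mem_erase.1 hy).1
            have hmapped := rtg_map (s := fun p q => restrict A' (S.erase u) p q ∨
                restrict A' (S.erase u) q p) (fun z => if z = u then v else z)
              (by
                rintro p q (hpq | hpq)
                · rcases edge p q hpq with h' | h'
                  exacts [Or.inl (Or.inl h'), Or.inr h']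
                · rcases edge q p hpq with h' | h'
                  exacts [Or.inl (Or.inr h'), Or.inr h'.symm])
              (hconn x (Finset.mem_of_mem_erase hx) y (Finset.mem_of_mem_erase hy))
            simpa only [if_neg hx', if_neg hy'] using hmapped
          have hTDH := ih (S.erase u) hTV hwT
          have hins : insert u (S.erase u) = S := Finset.insert_erase huS
          have hrel : twinArc (restrict A' (S.erase u)) v u auv avu =
              restrict (twinArc A' v u auv avu) S := by
            funext x y; apply propext
            constructor
            · rintro (⟨hab, hx, hy⟩ | ⟨e1, e2, ha⟩ | ⟨e1, e2, ha⟩ |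
                ⟨e1, hab, hvT', hy⟩ | ⟨e1, hab, hx, hvT'⟩)
              · exact ⟨Or.inl hab, Finset.mem_of_mem_erase hx, Finset.mem_of_mem_erase hy⟩
              · subst x; subst y; exact ⟨Or.inr (Or.inl ⟨rfl, rfl, ha⟩), huS, hvS⟩
              · subst x; subst y; exact ⟨Or.inr (Or.inr (Or.inl ⟨rfl, rfl, ha⟩)), hvS, huS⟩
              · subst x
                exact ⟨Or.inr (Or.inr (Or.inr (Or.inl ⟨rfl, hab⟩))), huS,
                  Finset.mem_of_mem_erase hy⟩
              · subst y
                exact ⟨Or.inr (Or.inr (Or.inr (Or.inr ⟨rfl, hab⟩))),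
                  Finset.mem_of_mem_erase hx, huS⟩
            · rintro ⟨hab | ⟨e1, e2, ha⟩ | ⟨e1, e2, ha⟩ | ⟨e1, hab⟩ | ⟨e1, hab⟩, hx, hy⟩
              · have hxu : x ≠ u := fun e => hu (e ▸ (twinDH_conf h _ _ hab).1)
                have hyu : y ≠ u := fun e => hu (e ▸ (twinDH_conf h _ _ hab).2)
                exact Or.inl ⟨hab, Finset.mem_erase.2 ⟨hxu, hx⟩, Finset.mem_erase.2 ⟨hyu, hy⟩⟩
              · subst x; subst y; exact Or.inr (Or.inl ⟨rfl, rfl, ha⟩)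
              · subst x; subst y; exact Or.inr (Or.inr (Or.inl ⟨rfl, rfl, ha⟩))
              · subst x
                have hyu : y ≠ u := fun e => hu (e ▸ (twinDH_conf h _ _ hab).2)
                exact Or.inr (Or.inr (Or.inr (Or.inl ⟨rfl, hab, hvT,
                  Finset.mem_erase.2 ⟨hyu, hy⟩⟩)))
              · subst y
                have hxu : x ≠ u := fun e => hu (e ▸ (twinDH_conf h _ _ hab).1)
                exact Or.inr (Or.inr (Or.inr (Or.inr ⟨rfl, hab,
                  Finset.mem_erase.2 ⟨hxu, hx⟩, hvT⟩)))
          have hres := TwinDH.twin v u auv avu hvT (Finset.notMem_erase u S) hTDH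
          rwa [hrel, hins] at hres
        · -- u ∈ S, v ∉ S : replace u by v, then swap back
          have hTV : insert v (S.erase u) ⊆ V' := by
            intro x hx
            rcases Finset.mem_insert.1 hx with e | hx
            · subst x; exact hv
            · exact (Finset.mem_insert.1 (hS (Finset.mem_of_mem_erase hx))).resolve_left
                (Finset.ne_of_mem_erase hx)
          have hSsub : S.erase u ⊆ insert v (S.erase u) := Finset.subset_insert _ _
          have edge : ∀ x y, restrict (twinArc A' v u auv avu) S x y →
              restrict A' (insert v (S.erase u)) ((fun z => if z = u then v else z) x)
                ((fun z => if z = u then v else z) y) ∨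
              (fun z => if z = u then v else z) x = (fun z => if z = u then v else z) y := by
            rintro x y ⟨hab | ⟨e1, e2, -⟩ | ⟨e1, e2, -⟩ | ⟨e1, hab⟩ | ⟨e1, hab⟩, hx, hy⟩
            · have hxu : x ≠ u := fun e => hu (e ▸ (twinDH_conf h _ _ hab).1)
              have hyu : y ≠ u := fun e => hu (e ▸ (twinDH_conf h _ _ hab).2)
              left
              simp only [if_neg hxu, if_neg hyu]
              exact ⟨hab, hSsub (Finset.mem_erase.2 ⟨hxu, hx⟩),
                hSsub (Finset.mem_erase.2 ⟨hyu, hy⟩)⟩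
            · subst y; exact absurd hy hvS
            · subst x; exact absurd hx hvS
            · subst x
              have hyu : y ≠ u := fun e => hu (e ▸ (twinDH_conf h _ _ hab).2)
              left
              simp only [if_pos rfl, if_neg hyu]
              exact ⟨hab, Finset.mem_insert_self _ _, hSsub (Finset.mem_erase.2 ⟨hyu, hy⟩)⟩
            · subst y
              have hxu : x ≠ u := fun e => hu (e ▸ (twinDH_conf h _ _ hab).1)
              left
              simp only [if_pos rfl, if_neg hxu]
              exact ⟨hab, hSsub (Finset.mem_erase.2 ⟨hxu, hx⟩), Finset.mem_insert_self _ _⟩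
          have pre : ∀ x ∈ insert v (S.erase u), ∃ x', x' ∈ S ∧
              (if x' = u then v else x') = x := by
            intro x hx
            rcases Finset.mem_insert.1 hx with e | hx
            · subst x; exact ⟨u, huS, by simp⟩
            · exact ⟨x, Finset.mem_of_mem_erase hx, by rw [if_neg (Finset.ne_of_mem_erase hx)]⟩
          have hwT : WeaklyConn A' (insert v (S.erase u)) := by
            refine ⟨⟨v, Finset.mem_insert_self _ _⟩, ?_⟩
            intro x hx y hy
            obtain ⟨x', hx', hfx⟩ := pre x hx
            obtain ⟨y', hy', hfy⟩ := pre y hy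
            have hmapped := rtg_map (s := fun p q => restrict A' (insert v (S.erase u)) p q ∨
                restrict A' (insert v (S.erase u)) q p) (fun z => if z = u then v else z)
              (by
                rintro p q (hpq | hpq)
                · rcases edge p q hpq with h' | h'
                  exacts [Or.inl (Or.inl h'), Or.inr h']
                · rcases edge q p hpq with h' | h'
                  exacts [Or.inl (Or.inr h'), Or.inr h'.symm])
              (hconn x' hx' y' hy')
            simpa only [hfx, hfy] using hmapped
          have hTDH := ih (insert v (S.erase u)) hTV hwT
          have hmap := twinDH_map (Equiv.swap u v) hTDH
          have himg : (insert v (S.erase u)).image (Equiv.swap u v) = S := by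
            rw [Finset.image_insert, Equiv.swap_apply_right]
            have himg2 : (S.erase u).image (Equiv.swap u v) = S.erase u := by
              rw [Finset.image_congr (g := id), Finset.image_id]
              intro z hz
              have hz' := Finset.mem_coe.1 hz
              have hzu : z ≠ u := Finset.ne_of_mem_erase hz'
              have hzv : z ≠ v := fun e => hvS (e ▸ Finset.mem_of_mem_erase hz')
              exact Equiv.swap_apply_of_ne_of_ne hzu hzv
            rw [himg2, Finset.insert_erase huS]
          have memiff : ∀ z, Equiv.swap u v z ∈ insert v (S.erase u) ↔ z ∈ S := by
            intro z
            rcases eq_or_ne z u with e | hzu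
            · subst z
              rw [Equiv.swap_apply_left]
              simp [huS]
            · rcases eq_or_ne z v with e | hzv
              · subst z
                rw [Equiv.swap_apply_right]
                constructor
                · intro hmem
                  rcases Finset.mem_insert.1 hmem with e | hmem
                  · exact absurd hv (e ▸ hu)
                  · exact absurd rfl (Finset.ne_of_mem_erase hmem)
                · intro hmem; exact absurd hmem hvS
              · rw [Equiv.swap_apply_of_ne_of_ne hzu hzv]
                constructor
                · intro hmem
                  rcases Finset.mem_insert.1 hmem with e | hmem
                  · exact absurd e hzv
                  · exact Finset.mem_of_mem_erase hmem
                · intro hmem; exact Finset.mem_insert_of_mem (Finset.mem_erase.2 ⟨hzu, hmem⟩)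
          have arciff : ∀ x y, x ∈ S → y ∈ S →
              (A' (Equiv.swap u v x) (Equiv.swap u v y) ↔ twinArc A' v u auv avu x y) := by
            intro x y hx hy
            have hxv : x ≠ v := fun e => hvS (e ▸ hx)
            have hyv : y ≠ v := fun e => hvS (e ▸ hy)
            rcases eq_or_ne x u with e | hxu
            · subst x
              rcases eq_or_ne y u with e | hyu
              · subst y
                rw [Equiv.swap_apply_left]
                constructor
                · intro hab; exact absurd hab (twinDH_noloop h v)
                · rintro (hab | ⟨-, e, -⟩ | ⟨e, -, -⟩ | ⟨-, hab⟩ | ⟨-, hab⟩)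
                  · exact absurd (twinDH_conf h _ _ hab).1 hu
                  · exact absurd hv (e ▸ hu)
                  · exact absurd hv (e ▸ hu)
                  · exact absurd (twinDH_conf h _ _ hab).2 hu
                  · exact absurd (twinDH_conf h _ _ hab).1 hu
              · rw [Equiv.swap_apply_left, Equiv.swap_apply_of_ne_of_ne hyu hyv]
                constructor
                · intro hab; exact Or.inr (Or.inr (Or.inr (Or.inl ⟨rfl, hab⟩)))
                · rintro (hab | ⟨-, e, -⟩ | ⟨e, -, -⟩ | ⟨-, hab⟩ | ⟨e, -⟩)
                  · exact absurd (twinDH_conf h _ _ hab).1 hu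
                  · exact absurd e hyv
                  · exact absurd hv (e ▸ hu)
                  · exact hab
                  · exact absurd e hyu
            · rcases eq_or_ne y u with e | hyu
              · subst y
                rw [Equiv.swap_apply_left, Equiv.swap_apply_of_ne_of_ne hxu hxv]
                constructor
                · intro hab; exact Or.inr (Or.inr (Or.inr (Or.inr ⟨rfl, hab⟩)))
                · rintro (hab | ⟨e, -, -⟩ | ⟨e, -, -⟩ | ⟨e, -⟩ | ⟨-, hab⟩)
                  · exact absurd (twinDH_conf h _ _ hab).2 hu
                  · exact absurd e hxu
                  · exact absurd e hxv
                  · exact absurd e hxu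
                  · exact hab
              · rw [Equiv.swap_apply_of_ne_of_ne hxu hxv,
                  Equiv.swap_apply_of_ne_of_ne hyu hyv]
                constructor
                · intro hab; exact Or.inl hab
                · rintro (hab | ⟨e, -, -⟩ | ⟨e, -, -⟩ | ⟨e, -⟩ | ⟨e, -⟩)
                  · exact hab
                  · exact absurd e hxu
                  · exact absurd e hxv
                  · exact absurd e hxu
                  · exact absurd e hyu
          have hrel : (fun x y => restrict A' (insert v (S.erase u))
                ((Equiv.swap u v).symm x) ((Equiv.swap u v).symm y)) =
              restrict (twinArc A' v u auv avu) S := by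
            funext x y
            rw [Equiv.symm_swap]
            apply propext
            constructor
            · rintro ⟨hab, hx, hy⟩
              have hxS := (memiff x).1 hx
              have hyS := (memiff y).1 hy
              exact ⟨(arciff x y hxS hyS).1 hab, hxS, hyS⟩
            · rintro ⟨hab, hx, hy⟩
              exact ⟨(arciff x y hx hy).2 hab, (memiff x).2 hx, (memiff y).2 hy⟩
          rw [himg, hrel] at hmap
          exact hmap
      · -- u ∉ S
        have hSV : S ⊆ V' := fun x hx =>
          (Finset.mem_insert.1 (hS hx)).resolve_left (fun e => huS (e ▸ hx))
        have hrel : restrict (twinArc A' v u auv avu) S = restrict A' S := by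
          funext x y; apply propext
          constructor
          · rintro ⟨hab | ⟨e1, e2, -⟩ | ⟨e1, e2, -⟩ | ⟨e1, hab⟩ | ⟨e1, hab⟩, hx, hy⟩
            · exact ⟨hab, hx, hy⟩
            · exact absurd (e1 ▸ hx) huS
            · exact absurd (e2 ▸ hy) huS
            · exact absurd (e1 ▸ hx) huS
            · exact absurd (e1 ▸ hy) huS
          · rintro ⟨hab, hx, hy⟩; exact ⟨Or.inl hab, hx, hy⟩
        rw [hrel]
        refine ih S hSV ⟨hne, ?_⟩
        intro x hx y hy
        have hcxy := hconn x hx y hy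
        simp only [hrel] at hcxy
        exact hcxy
  | @pendPlus V' A' a u ha hu h ih =>
      intro S hS hw
      obtain ⟨hne, hconn⟩ := hw
      have hau : a ≠ u := fun e => hu (e ▸ ha)
      by_cases huS : u ∈ S
      · by_cases haS : a ∈ S
        · have hTV : S.erase u ⊆ V' := by
            intro x hx
            exact (Finset.mem_insert.1 (hS (Finset.mem_of_mem_erase hx))).resolve_left
              (Finset.ne_of_mem_erase hx)
          have haT : a ∈ S.erase u := Finset.mem_erase.2 ⟨hau, haS⟩
          have edge : ∀ x y, restrict (fun x y => A' x y ∨ (x = u ∧ y = a)) S x y →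
              restrict A' (S.erase u) ((fun z => if z = u then a else z) x)
                ((fun z => if z = u then a else z) y) ∨
              (fun z => if z = u then a else z) x = (fun z => if z = u then a else z) y := by
            rintro x y ⟨hab | ⟨e1, e2⟩, hx, hy⟩
            · have hxu : x ≠ u := fun e => hu (e ▸ (twinDH_conf h _ _ hab).1)
              have hyu : y ≠ u := fun e => hu (e ▸ (twinDH_conf h _ _ hab).2)
              left
              simp only [if_neg hxu, if_neg hyu]
              exact ⟨hab, Finset.mem_erase.2 ⟨hxu, hx⟩, Finset.mem_erase.2 ⟨hyu, hy⟩⟩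
            · subst x; subst y; right; simp [hau]
          have hwT : WeaklyConn A' (S.erase u) := by
            refine ⟨⟨a, haT⟩, ?_⟩
            intro x hx y hy
            have hx' : x ≠ u := (Finset.mem_erase.1 hx).1
            have hy' : y ≠ u := (Finset.mem_erase.1 hy).1
            have hmapped := rtg_map (s := fun p q => restrict A' (S.erase u) p q ∨
                restrict A' (S.erase u) q p) (fun z => if z = u then a else z)
              (by
                rintro p q (hpq | hpq)
                · rcases edge p q hpq with h' | h'
                  exacts [Or.inl (Or.inl h'), Or.inr h']
                · rcases edge q p hpq with h' | h'
                  exacts [Or.inl (Or.inr h'), Or.inr h'.symm])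
              (hconn x (Finset.mem_of_mem_erase hx) y (Finset.mem_of_mem_erase hy))
            simpa only [if_neg hx', if_neg hy'] using hmapped
          have hTDH := ih (S.erase u) hTV hwT
          have hins : insert u (S.erase u) = S := Finset.insert_erase huS
          have hrel : (fun x y => restrict A' (S.erase u) x y ∨ (x = u ∧ y = a)) =
              restrict (fun x y => A' x y ∨ (x = u ∧ y = a)) S := by
            funext x y; apply propext
            constructor
            · rintro (⟨hab, hx, hy⟩ | ⟨e1, e2⟩)
              · exact ⟨Or.inl hab, Finset.mem_of_mem_erase hx, Finset.mem_of_mem_erase hy⟩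
              · subst x; subst y; exact ⟨Or.inr ⟨rfl, rfl⟩, huS, haS⟩
            · rintro ⟨hab | ⟨e1, e2⟩, hx, hy⟩
              · have hxu : x ≠ u := fun e => hu (e ▸ (twinDH_conf h _ _ hab).1)
                have hyu : y ≠ u := fun e => hu (e ▸ (twinDH_conf h _ _ hab).2)
                exact Or.inl ⟨hab, Finset.mem_erase.2 ⟨hxu, hx⟩, Finset.mem_erase.2 ⟨hyu, hy⟩⟩
              · exact Or.inr ⟨e1, e2⟩
          have hres := TwinDH.pendPlus a u haT (Finset.notMem_erase u S) hTDH
          rwa [hrel, hins] at hres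
        · -- a ∉ S, u ∈ S : S = {u}
          have hSu : ∀ w ∈ S, w = u := by
            intro w hw'
            refine rtg_inv (P := fun z => z = u) ?_ (hconn u huS w hw') rfl
            rintro p q (⟨hab | ⟨e1, e2⟩, -, hq⟩ | ⟨hab | ⟨e1, e2⟩, hq, -⟩) hp
            · exact absurd (twinDH_conf h _ _ (hp ▸ hab)).1 hu
            · exact absurd (e2 ▸ hq) haS
            · exact absurd (twinDH_conf h _ _ (hp ▸ hab)).2 hu
            · exact e1
          have hSeq : S = {u} := Finset.eq_singleton_iff_unique_mem.2 ⟨huS, hSu⟩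
          subst hSeq
          have hrel : restrict (fun x y => A' x y ∨ (x = u ∧ y = a)) ({u} : Finset ℕ) =
              (fun _ _ => False) := by
            funext x y; apply propext
            constructor
            · rintro ⟨hab | ⟨e1, e2⟩, hx, hy⟩
              · have hx' : x = u := Finset.mem_singleton.1 hx
                exact absurd (hx' ▸ (twinDH_conf h _ _ hab).1) hu
              · exact hau (e2.symm.trans (Finset.mem_singleton.1 hy))
            · exact False.elim
          rw [hrel]
          exact TwinDH.single u
      · have hSV : S ⊆ V' := fun x hx =>
          (Finset.mem_insert.1 (hS hx)).resolve_left (fun e => huS (e ▸ hx))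
        have hrel : restrict (fun x y => A' x y ∨ (x = u ∧ y = a)) S = restrict A' S := by
          funext x y; apply propext
          constructor
          · rintro ⟨hab | ⟨e1, e2⟩, hx, hy⟩
            · exact ⟨hab, hx, hy⟩
            · exact absurd (e1 ▸ hx) huS
          · rintro ⟨hab, hx, hy⟩; exact ⟨Or.inl hab, hx, hy⟩
        rw [hrel]
        refine ih S hSV ⟨hne, ?_⟩
        intro x hx y hy
        have hcxy := hconn x hx y hy
        simp only [hrel] at hcxy
        exact hcxy
  | @pendMinus V' A' a u ha hu h ih =>
      intro S hS hw
      obtain ⟨hne, hconn⟩ := hw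
      have hau : a ≠ u := fun e => hu (e ▸ ha)
      by_cases huS : u ∈ S
      · by_cases haS : a ∈ S
        · have hTV : S.erase u ⊆ V' := by
            intro x hx
            exact (Finset.mem_insert.1 (hS (Finset.mem_of_mem_erase hx))).resolve_left
              (Finset.ne_of_mem_erase hx)
          have haT : a ∈ S.erase u := Finset.mem_erase.2 ⟨hau, haS⟩
          have edge : ∀ x y, restrict (fun x y => A' x y ∨ (x = a ∧ y = u)) S x y →
              restrict A' (S.erase u) ((fun z => if z = u then a else z) x)
                ((fun z => if z = u then a else z) y) ∨
              (fun z => if z = u then a else z) x = (fun z => if z = u then a else z) y := by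
            rintro x y ⟨hab | ⟨e1, e2⟩, hx, hy⟩
            · have hxu : x ≠ u := fun e => hu (e ▸ (twinDH_conf h _ _ hab).1)
              have hyu : y ≠ u := fun e => hu (e ▸ (twinDH_conf h _ _ hab).2)
              left
              simp only [if_neg hxu, if_neg hyu]
              exact ⟨hab, Finset.mem_erase.2 ⟨hxu, hx⟩, Finset.mem_erase.2 ⟨hyu, hy⟩⟩
            · subst x; subst y; right; simp [hau]
          have hwT : WeaklyConn A' (S.erase u) := by
            refine ⟨⟨a, haT⟩, ?_⟩
            intro x hx y hy
            have hx' : x ≠ u := (Finset.mem_erase.1 hx).1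
            have hy' : y ≠ u := (Finset.mem_erase.1 hy).1
            have hmapped := rtg_map (s := fun p q => restrict A' (S.erase u) p q ∨
                restrict A' (S.erase u) q p) (fun z => if z = u then a else z)
              (by
                rintro p q (hpq | hpq)
                · rcases edge p q hpq with h' | h'
                  exacts [Or.inl (Or.inl h'), Or.inr h']
                · rcases edge q p hpq with h' | h'
                  exacts [Or.inl (Or.inr h'), Or.inr h'.symm])
              (hconn x (Finset.mem_of_mem_erase hx) y (Finset.mem_of_mem_erase hy))
            simpa only [if_neg hx', if_neg hy'] using hmapped
          have hTDH := ih (S.erase u) hTV hwT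
          have hins : insert u (S.erase u) = S := Finset.insert_erase huS
          have hrel : (fun x y => restrict A' (S.erase u) x y ∨ (x = a ∧ y = u)) =
              restrict (fun x y => A' x y ∨ (x = a ∧ y = u)) S := by
            funext x y; apply propext
            constructor
            · rintro (⟨hab, hx, hy⟩ | ⟨e1, e2⟩)
              · exact ⟨Or.inl hab, Finset.mem_of_mem_erase hx, Finset.mem_of_mem_erase hy⟩
              · subst x; subst y; exact ⟨Or.inr ⟨rfl, rfl⟩, haS, huS⟩
            · rintro ⟨hab | ⟨e1, e2⟩, hx, hy⟩
              · have hxu : x ≠ u := fun e => hu (e ▸ (twinDH_conf h _ _ hab).1)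
                have hyu : y ≠ u := fun e => hu (e ▸ (twinDH_conf h _ _ hab).2)
                exact Or.inl ⟨hab, Finset.mem_erase.2 ⟨hxu, hx⟩, Finset.mem_erase.2 ⟨hyu, hy⟩⟩
              · exact Or.inr ⟨e1, e2⟩
          have hres := TwinDH.pendMinus a u haT (Finset.notMem_erase u S) hTDH
          rwa [hrel, hins] at hres
        · have hSu : ∀ w ∈ S, w = u := by
            intro w hw'
            refine rtg_inv (P := fun z => z = u) ?_ (hconn u huS w hw') rfl
            rintro p q (⟨hab | ⟨e1, e2⟩, -, hq⟩ | ⟨hab | ⟨e1, e2⟩, hq, -⟩) hp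
            · exact absurd (twinDH_conf h _ _ (hp ▸ hab)).1 hu
            · exact e2
            · exact absurd (twinDH_conf h _ _ (hp ▸ hab)).2 hu
            · exact absurd (e1 ▸ hq) haS
          have hSeq : S = {u} := Finset.eq_singleton_iff_unique_mem.2 ⟨huS, hSu⟩
          subst hSeq
          have hrel : restrict (fun x y => A' x y ∨ (x = a ∧ y = u)) ({u} : Finset ℕ) =
              (fun _ _ => False) := by
            funext x y; apply propext
            constructor
            · rintro ⟨hab | ⟨e1, e2⟩, hx, hy⟩
              · have hx' : x = u := Finset.mem_singleton.1 hx
                exact absurd (hx' ▸ (twinDH_conf h _ _ hab).1) hu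
              · exact hau (e1.symm.trans (Finset.mem_singleton.1 hx))
            · exact False.elim
          rw [hrel]
          exact TwinDH.single u
      · have hSV : S ⊆ V' := fun x hx =>
          (Finset.mem_insert.1 (hS hx)).resolve_left (fun e => huS (e ▸ hx))
        have hrel : restrict (fun x y => A' x y ∨ (x = a ∧ y = u)) S = restrict A' S := by
          funext x y; apply propext
          constructor
          · rintro ⟨hab | ⟨e1, e2⟩, hx, hy⟩
            · exact ⟨hab, hx, hy⟩
            · exact absurd (e2 ▸ hy) huS
          · rintro ⟨hab, hx, hy⟩; exact ⟨Or.inl hab, hx, hy⟩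
        rw [hrel]
        refine ih S hSV ⟨hne, ?_⟩
        intro x hx y hy
        have hcxy := hconn x hx y hy
        simp only [hrel] at hcxy
        exact hcxy

theorem stmt_3 (V : Finset ℕ) (A : ℕ → ℕ → Prop) (h : TwinDH V A)
    (S : Finset ℕ) (hS : S ⊆ V) (hw : WeaklyConn A S) :
    TwinDH S (restrict A S) := twinDH_induced h S hS hw
end

section
/- If G is a twin-distance-hereditary digraph, then its underlying undirected graph un(G) is a distance-hereditary graph. -/
lemma rel_ext {E E' : ℕ → ℕ → Prop} (h : ∀ x y, E x y ↔ E' x y) : E = E' :=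
  funext fun x => funext fun y => propext (h x y)

lemma udh_congr {V : Finset ℕ} {E E' : ℕ → ℕ → Prop} (h : UDH V E)
    (he : ∀ x y, E x y ↔ E' x y) : UDH V E' := by
  rwa [rel_ext he] at h

lemma udh_sub {V : Finset ℕ} {E : ℕ → ℕ → Prop} (h : UDH V E) :
    ∀ x y, E x y → x ∈ V ∧ y ∈ V := by
  induction h with
  | single v => intro x y hxy; exact hxy.elim
  | pendant a u ha hu h ih =>
      rintro x y (hxy | ⟨rfl, rfl⟩ | ⟨rfl, rfl⟩)
      · exact ⟨Finset.mem_insert_of_mem (ih x y hxy).1,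
          Finset.mem_insert_of_mem (ih x y hxy).2⟩
      · exact ⟨Finset.mem_insert_self _ _, Finset.mem_insert_of_mem ha⟩
      · exact ⟨Finset.mem_insert_of_mem ha, Finset.mem_insert_self _ _⟩
  | falseTwin v u hv hu h ih =>
      rintro x y (hxy | ⟨rfl, hvy⟩ | ⟨rfl, hxv⟩)
      · exact ⟨Finset.mem_insert_of_mem (ih x y hxy).1,
          Finset.mem_insert_of_mem (ih x y hxy).2⟩
      · exact ⟨Finset.mem_insert_self _ _, Finset.mem_insert_of_mem (ih _ _ hvy).2⟩
      · exact ⟨Finset.mem_insert_of_mem (ih _ _ hxv).1, Finset.mem_insert_self _ _⟩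
  | trueTwin v u hv hu h ih =>
      rintro x y (hxy | ⟨rfl, hvy⟩ | ⟨rfl, hxv⟩ | ⟨rfl, rfl⟩ | ⟨rfl, rfl⟩)
      · exact ⟨Finset.mem_insert_of_mem (ih x y hxy).1,
          Finset.mem_insert_of_mem (ih x y hxy).2⟩
      · exact ⟨Finset.mem_insert_self _ _, Finset.mem_insert_of_mem (ih _ _ hvy).2⟩
      · exact ⟨Finset.mem_insert_of_mem (ih _ _ hxv).1, Finset.mem_insert_self _ _⟩
      · exact ⟨Finset.mem_insert_self _ _, Finset.mem_insert_of_mem hv⟩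
      · exact ⟨Finset.mem_insert_of_mem hv, Finset.mem_insert_self _ _⟩

lemma tdh_sub {V : Finset ℕ} {A : ℕ → ℕ → Prop} (h : TwinDH V A) :
    ∀ x y, A x y → x ∈ V ∧ y ∈ V ∧ x ≠ y := by
  induction h with
  | single v => intro x y hxy; exact hxy.elim
  | union hdis h1 h2 ih1 ih2 =>
      rintro x y (hxy | hxy)
      · obtain ⟨h1, h2, h3⟩ := ih1 x y hxy
        exact ⟨Finset.mem_union_left _ h1, Finset.mem_union_left _ h2, h3⟩
      · obtain ⟨h1, h2, h3⟩ := ih2 x y hxy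
        exact ⟨Finset.mem_union_right _ h1, Finset.mem_union_right _ h2, h3⟩
  | twin v u auv avu hv hu h ih =>
      rintro x y (hxy | ⟨rfl, rfl, _⟩ | ⟨rfl, rfl, _⟩ | ⟨rfl, hvy⟩ | ⟨rfl, hxv⟩)
      · obtain ⟨h1, h2, h3⟩ := ih x y hxy
        exact ⟨Finset.mem_insert_of_mem h1, Finset.mem_insert_of_mem h2, h3⟩
      · exact ⟨Finset.mem_insert_self _ _, Finset.mem_insert_of_mem hv,
          fun h => hu (h ▸ hv)⟩
      · exact ⟨Finset.mem_insert_of_mem hv, Finset.mem_insert_self _ _,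
          fun h => hu (h ▸ hv)⟩
      · exact ⟨Finset.mem_insert_self _ _, Finset.mem_insert_of_mem (ih _ _ hvy).2.1,
          fun h => hu (h ▸ (ih _ _ hvy).2.1)⟩
      · exact ⟨Finset.mem_insert_of_mem (ih _ _ hxv).1, Finset.mem_insert_self _ _,
          fun h => hu (h ▸ (ih _ _ hxv).1)⟩
  | pendPlus a u ha hu h ih =>
      rintro x y (hxy | ⟨rfl, rfl⟩)
      · obtain ⟨h1, h2, h3⟩ := ih x y hxy
        exact ⟨Finset.mem_insert_of_mem h1, Finset.mem_insert_of_mem h2, h3⟩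
      · exact ⟨Finset.mem_insert_self _ _, Finset.mem_insert_of_mem ha,
          fun h => hu (h ▸ ha)⟩
  | pendMinus a u ha hu h ih =>
      rintro x y (hxy | ⟨rfl, rfl⟩)
      · obtain ⟨h1, h2, h3⟩ := ih x y hxy
        exact ⟨Finset.mem_insert_of_mem h1, Finset.mem_insert_of_mem h2, h3⟩
      · exact ⟨Finset.mem_insert_of_mem ha, Finset.mem_insert_self _ _,
          fun h => hu (h ▸ ha) |>.elim⟩

lemma udh_isol {V : Finset ℕ} {E : ℕ → ℕ → Prop} (h : UDH V E) :
    ∀ w ∉ V, UDH (insert w V) E := by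
  induction h with
  | single v =>
      intro w hw
      have h0 := UDH.falseTwin v w (Finset.mem_singleton_self v) hw (UDH.single v)
      exact udh_congr h0 (by tauto)
  | pendant a u ha hu h ih =>
      rename_i V' E'
      intro w hw
      have hw' : w ∉ V' := fun hc => hw (Finset.mem_insert_of_mem hc)
      have hwu : w ≠ u := fun hc => hw (hc ▸ Finset.mem_insert_self _ _)
      have hum : u ∉ insert w V' := by
        simp only [Finset.mem_insert]
        rintro (rfl | hc)
        · exact hwu rfl
        · exact hu hc
      have h0 := UDH.pendant a u (Finset.mem_insert_of_mem ha) hum (ih w hw')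
      rwa [Finset.insert_comm] at h0
  | falseTwin v u hv hu h ih =>
      rename_i V' E'
      intro w hw
      have hw' : w ∉ V' := fun hc => hw (Finset.mem_insert_of_mem hc)
      have hwu : w ≠ u := fun hc => hw (hc ▸ Finset.mem_insert_self _ _)
      have hum : u ∉ insert w V' := by
        simp only [Finset.mem_insert]
        rintro (rfl | hc)
        · exact hwu rfl
        · exact hu hc
      have h0 := UDH.falseTwin v u (Finset.mem_insert_of_mem hv) hum (ih w hw')
      rwa [Finset.insert_comm] at h0
  | trueTwin v u hv hu h ih =>
      rename_i V' E'
      intro w hw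
      have hw' : w ∉ V' := fun hc => hw (Finset.mem_insert_of_mem hc)
      have hwu : w ≠ u := fun hc => hw (hc ▸ Finset.mem_insert_self _ _)
      have hum : u ∉ insert w V' := by
        simp only [Finset.mem_insert]
        rintro (rfl | hc)
        · exact hwu rfl
        · exact hu hc
      have h0 := UDH.trueTwin v u (Finset.mem_insert_of_mem hv) hum (ih w hw')
      rwa [Finset.insert_comm] at h0

lemma udh_union {V₁ V₂ : Finset ℕ} {E₁ E₂ : ℕ → ℕ → Prop}
    (hdis : Disjoint V₁ V₂) (h1 : UDH V₁ E₁) (h2 : UDH V₂ E₂) :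
    UDH (V₁ ∪ V₂) (fun x y => E₁ x y ∨ E₂ x y) := by
  induction h2 with
  | single v =>
      have hv : v ∉ V₁ := fun hc => (Finset.disjoint_left.mp hdis hc)
        (by simp_all [Finset.mem_singleton])
      have h0 := udh_isol h1 v hv
      have : V₁ ∪ {v} = insert v V₁ := by
        ext x; simp [Finset.mem_union, Finset.mem_insert, or_comm]
      rw [this]
      exact udh_congr h0 (by tauto)
  | pendant a u ha hu h ih =>
      have hdis' : Disjoint V₁ ‹Finset ℕ› := by
        exact hdis.mono_right (Finset.subset_insert _ _)
      have hu' : u ∉ V₁ ∪ ‹Finset ℕ› := by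
        simp only [Finset.mem_union]
        rintro (hc | hc)
        · exact (Finset.disjoint_left.mp hdis hc) (Finset.mem_insert_self _ _)
        · exact hu hc
      have h0 := UDH.pendant a u (Finset.mem_union_right _ ha) hu' (ih hdis')
      rw [Finset.union_insert]
      refine udh_congr h0 ?_
      intro x y; tauto
  | falseTwin v u hv hu h ih =>
      have hdis' : Disjoint V₁ ‹Finset ℕ› := hdis.mono_right (Finset.subset_insert _ _)
      have hu' : u ∉ V₁ ∪ ‹Finset ℕ› := by
        simp only [Finset.mem_union]
        rintro (hc | hc)
        · exact (Finset.disjoint_left.mp hdis hc) (Finset.mem_insert_self _ _)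
        · exact hu hc
      have hvV1 : v ∉ V₁ := fun hc =>
        (Finset.disjoint_left.mp hdis' hc) hv
      have hE1v : ∀ y, ¬ E₁ v y := fun y hc => hvV1 (udh_sub h1 v y hc).1
      have hE1v' : ∀ x, ¬ E₁ x v := fun x hc => hvV1 (udh_sub h1 x v hc).2
      have h0 := UDH.falseTwin v u (Finset.mem_union_right _ hv) hu' (ih hdis')
      rw [Finset.union_insert]
      refine udh_congr h0 ?_
      intro x y
      have := hE1v y; have := hE1v' x
      tauto
  | trueTwin v u hv hu h ih =>
      have hdis' : Disjoint V₁ ‹Finset ℕ› := hdis.mono_right (Finset.subset_insert _ _)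
      have hu' : u ∉ V₁ ∪ ‹Finset ℕ› := by
        simp only [Finset.mem_union]
        rintro (hc | hc)
        · exact (Finset.disjoint_left.mp hdis hc) (Finset.mem_insert_self _ _)
        · exact hu hc
      have hvV1 : v ∉ V₁ := fun hc =>
        (Finset.disjoint_left.mp hdis' hc) hv
      have hE1v : ∀ y, ¬ E₁ v y := fun y hc => hvV1 (udh_sub h1 v y hc).1
      have hE1v' : ∀ x, ¬ E₁ x v := fun x hc => hvV1 (udh_sub h1 x v hc).2
      have h0 := UDH.trueTwin v u (Finset.mem_union_right _ hv) hu' (ih hdis')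
      rw [Finset.union_insert]
      refine udh_congr h0 ?_
      intro x y
      have := hE1v y; have := hE1v' x
      tauto

set_option maxHeartbeats 2000000 in
theorem stmt_4 (V : Finset ℕ) (A : ℕ → ℕ → Prop) (h : TwinDH V A) :
    UDH V (fun x y => x ≠ y ∧ (A x y ∨ A y x)) := by
  induction h with
  | single v =>
      exact udh_congr (UDH.single v) (by tauto)
  | union hdis h1 h2 ih1 ih2 =>
      rename_i V₁ V₂ A₁ A₂
      have sub1 := tdh_sub h1
      have sub2 := tdh_sub h2
      refine udh_congr (udh_union hdis ih1 ih2) ?_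
      intro x y
      constructor
      · rintro (⟨hne, hA⟩ | ⟨hne, hA⟩) <;> exact ⟨hne, by tauto⟩
      · rintro ⟨hne, (hA | hA) | (hA | hA)⟩
        · exact Or.inl ⟨hne, Or.inl hA⟩
        · exact Or.inr ⟨hne, Or.inl hA⟩
        · exact Or.inl ⟨hne, Or.inr hA⟩
        · exact Or.inr ⟨hne, Or.inr hA⟩
  | twin v u auv avu hv hu h ih =>
      rename_i V A
      have sub := tdh_sub h
      have hAu1 : ∀ w, ¬ A u w := fun w hc => hu (sub u w hc).1
      have hAu2 : ∀ w, ¬ A w u := fun w hc => hu (sub w u hc).2.1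
      have huv : u ≠ v := fun hc => hu (hc ▸ hv)
      by_cases hc : auv ∨ avu
      · refine udh_congr (UDH.trueTwin v u hv hu ih) ?_
        intro x y
        unfold twinArc
        constructor
        · rintro (⟨hne, hA | hA⟩ | ⟨rfl, hne, hA | hA⟩ | ⟨rfl, hne, hA | hA⟩ |
            ⟨rfl, rfl⟩ | ⟨rfl, rfl⟩)
          · exact ⟨hne, Or.inl (Or.inl hA)⟩
          · exact ⟨hne, Or.inr (Or.inl hA)⟩
          · exact ⟨by rintro rfl; exact hAu2 v hA,
              Or.inl (Or.inr (Or.inr (Or.inr (Or.inl ⟨rfl, hA⟩))))⟩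
          · exact ⟨by rintro rfl; exact hAu1 v hA,
              Or.inr (Or.inr (Or.inr (Or.inr (Or.inr ⟨rfl, hA⟩))))⟩
          · exact ⟨by rintro rfl; exact hAu1 v hA,
              Or.inl (Or.inr (Or.inr (Or.inr (Or.inr ⟨rfl, hA⟩))))⟩
          · exact ⟨by rintro rfl; exact hAu2 v hA,
              Or.inr (Or.inr (Or.inr (Or.inr (Or.inl ⟨rfl, hA⟩))))⟩
          · rcases hc with hc | hc
            · exact ⟨huv, Or.inl (Or.inr (Or.inl ⟨rfl, rfl, hc⟩))⟩
            · exact ⟨huv, Or.inr (Or.inr (Or.inr (Or.inl ⟨rfl, rfl, hc⟩)))⟩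
          · rcases hc with hc | hc
            · exact ⟨fun h => huv h.symm, Or.inr (Or.inr (Or.inl ⟨rfl, rfl, hc⟩))⟩
            · exact ⟨fun h => huv h.symm, Or.inl (Or.inr (Or.inr (Or.inl ⟨rfl, rfl, hc⟩)))⟩
        · rintro ⟨hne, hA | hA⟩
          · rcases hA with hA | ⟨rfl, rfl, hauv⟩ | ⟨rfl, rfl, havu⟩ | ⟨rfl, hA⟩ | ⟨rfl, hA⟩
            · exact Or.inl ⟨hne, Or.inl hA⟩
            · exact Or.inr (Or.inr (Or.inr (Or.inl ⟨rfl, rfl⟩)))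
            · exact Or.inr (Or.inr (Or.inr (Or.inr ⟨rfl, rfl⟩)))
            · by_cases hyv : y = v
              · exact Or.inr (Or.inr (Or.inr (Or.inl ⟨rfl, hyv⟩)))
              · exact Or.inr (Or.inl ⟨rfl, fun h => hyv h.symm, Or.inl hA⟩)
            · by_cases hxv : x = v
              · exact Or.inr (Or.inr (Or.inr (Or.inr ⟨hxv, rfl⟩)))
              · exact Or.inr (Or.inr (Or.inl ⟨rfl, hxv, Or.inl hA⟩))
          · rcases hA with hA | ⟨rfl, rfl, hauv⟩ | ⟨rfl, rfl, havu⟩ | ⟨rfl, hA⟩ | ⟨rfl, hA⟩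
            · exact Or.inl ⟨hne, Or.inr hA⟩
            · exact Or.inr (Or.inr (Or.inr (Or.inr ⟨rfl, rfl⟩)))
            · exact Or.inr (Or.inr (Or.inr (Or.inl ⟨rfl, rfl⟩)))
            · by_cases hxv : x = v
              · exact Or.inr (Or.inr (Or.inr (Or.inr ⟨hxv, rfl⟩)))
              · exact Or.inr (Or.inr (Or.inl ⟨rfl, hxv, Or.inr hA⟩))
            · by_cases hyv : y = v
              · exact Or.inr (Or.inr (Or.inr (Or.inl ⟨rfl, hyv⟩)))
              · exact Or.inr (Or.inl ⟨rfl, fun h => hyv h.symm, Or.inr hA⟩)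
      · push_neg at hc
        obtain ⟨hnauv, hnavu⟩ := hc
        refine udh_congr (UDH.falseTwin v u hv hu ih) ?_
        intro x y
        unfold twinArc
        constructor
        · rintro (⟨hne, hA | hA⟩ | ⟨rfl, hne, hA | hA⟩ | ⟨rfl, hne, hA | hA⟩)
          · exact ⟨hne, Or.inl (Or.inl hA)⟩
          · exact ⟨hne, Or.inr (Or.inl hA)⟩
          · exact ⟨by rintro rfl; exact hAu2 v hA,
              Or.inl (Or.inr (Or.inr (Or.inr (Or.inl ⟨rfl, hA⟩))))⟩
          · exact ⟨by rintro rfl; exact hAu1 v hA,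
              Or.inr (Or.inr (Or.inr (Or.inr (Or.inr ⟨rfl, hA⟩))))⟩
          · exact ⟨by rintro rfl; exact hAu1 v hA,
              Or.inl (Or.inr (Or.inr (Or.inr (Or.inr ⟨rfl, hA⟩))))⟩
          · exact ⟨by rintro rfl; exact hAu2 v hA,
              Or.inr (Or.inr (Or.inr (Or.inr (Or.inl ⟨rfl, hA⟩))))⟩
        · rintro ⟨hne, hA | hA⟩
          · rcases hA with hA | ⟨rfl, rfl, hauv⟩ | ⟨rfl, rfl, havu⟩ | ⟨rfl, hA⟩ | ⟨rfl, hA⟩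
            · exact Or.inl ⟨hne, Or.inl hA⟩
            · exact (hnauv hauv).elim
            · exact (hnavu havu).elim
            · exact Or.inr (Or.inl ⟨rfl, (sub v y hA).2.2, Or.inl hA⟩)
            · exact Or.inr (Or.inr ⟨rfl, (sub x v hA).2.2, Or.inl hA⟩)
          · rcases hA with hA | ⟨rfl, rfl, hauv⟩ | ⟨rfl, rfl, havu⟩ | ⟨rfl, hA⟩ | ⟨rfl, hA⟩
            · exact Or.inl ⟨hne, Or.inr hA⟩
            · exact (hnauv hauv).elim
            · exact (hnavu havu).elim
            · exact Or.inr (Or.inr ⟨rfl, fun h => (sub v x hA).2.2 h.symm, Or.inr hA⟩)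
            · exact Or.inr (Or.inl ⟨rfl, fun h => (sub y v hA).2.2 h.symm, Or.inr hA⟩)
  | pendPlus a u ha hu h ih =>
      rename_i V A
      have sub := tdh_sub h
      have hua : u ≠ a := fun hc => hu (hc ▸ ha)
      refine udh_congr (UDH.pendant a u ha hu ih) ?_
      intro x y
      constructor
      · rintro (⟨hne, hA | hA⟩ | ⟨rfl, rfl⟩ | ⟨rfl, rfl⟩)
        · exact ⟨hne, Or.inl (Or.inl hA)⟩
        · exact ⟨hne, Or.inr (Or.inl hA)⟩
        · exact ⟨hua, Or.inl (Or.inr ⟨rfl, rfl⟩)⟩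
        · exact ⟨fun h => hua h.symm, Or.inr (Or.inr ⟨rfl, rfl⟩)⟩
      · rintro ⟨hne, (hA | ⟨rfl, rfl⟩) | (hA | ⟨rfl, rfl⟩)⟩
        · exact Or.inl ⟨hne, Or.inl hA⟩
        · exact Or.inr (Or.inl ⟨rfl, rfl⟩)
        · exact Or.inl ⟨hne, Or.inr hA⟩
        · exact Or.inr (Or.inr ⟨rfl, rfl⟩)
  | pendMinus a u ha hu h ih =>
      rename_i V A
      have hua : u ≠ a := fun hc => hu (hc ▸ ha)
      refine udh_congr (UDH.pendant a u ha hu ih) ?_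
      intro x y
      constructor
      · rintro (⟨hne, hA | hA⟩ | ⟨rfl, rfl⟩ | ⟨rfl, rfl⟩)
        · exact ⟨hne, Or.inl (Or.inl hA)⟩
        · exact ⟨hne, Or.inr (Or.inl hA)⟩
        · exact ⟨hua, Or.inr (Or.inr ⟨rfl, rfl⟩)⟩
        · exact ⟨fun h => hua h.symm, Or.inl (Or.inr ⟨rfl, rfl⟩)⟩
      · rintro ⟨hne, (hA | ⟨rfl, rfl⟩) | (hA | ⟨rfl, rfl⟩)⟩
        · exact Or.inl ⟨hne, Or.inl hA⟩
        · exact Or.inr (Or.inr ⟨rfl, rfl⟩)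
        · exact Or.inl ⟨hne, Or.inr hA⟩
        · exact Or.inr (Or.inl ⟨rfl, rfl⟩)
end
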